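/- Under assumptions (A1)--(A3), if the limit $q_f=\lim_{u\to\infty} f'(u)^2/(f(u)f''(u))$ exists, then $q_f\geq 1$. -/

import Mathlib

open Real Filter Set Topology

theorem stmt1 (f : ℝ → ℝ) (q : ℝ)
    (hf1 : ContDiffOn ℝ 1 f (Set.Ici 0)) (hf2 : ContDiffOn ℝ 2 f (Set.Ioi 0))
    (hf0 : f 0 = 0) (hf'0 : deriv f 0 = 0)
    (hf' : ∀ u > (0:ℝ), 0 < deriv f u) (hf'' : ∀ u > (0:ℝ), 0 < deriv (deriv f) u)
    (hq : Tendsto (fun u => (deriv f u) ^ 2 / (f u * deriv (deriv f) u)) atTop (𝓝 q)) :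
    1 ≤ q := by
  by_contra hq1
  push_neg at hq1
  -- f > 0 on (0,∞)
  have hmono : StrictMonoOn f (Set.Ici 0) := by
    apply strictMonoOn_of_deriv_pos (convex_Ici 0) hf1.continuousOn
    intro x hx
    rw [interior_Ici] at hx
    exact hf' x hx
  have hfpos : ∀ u > (0:ℝ), 0 < f u := by
    intro u hu
    have := hmono (self_mem_Ici) (le_of_lt hu : (0:ℝ) ≤ u) hu
    rwa [hf0] at this
  -- differentiability facts
  have hdf : ∀ u > (0:ℝ), DifferentiableAt ℝ f u := fun u hu =>
    (hf2.differentiableOn (by norm_num)).differentiableAt (isOpen_Ioi.mem_nhds hu)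
  have hdf2 : ContDiffOn ℝ 1 (deriv f) (Set.Ioi 0) := by
    exact ContDiffOn.deriv_of_isOpen (m := 1) hf2 isOpen_Ioi (by norm_num)
  have hdf' : ∀ u > (0:ℝ), DifferentiableAt ℝ (deriv f) u := fun u hu =>
    (hdf2.differentiableOn (by norm_num)).differentiableAt (isOpen_Ioi.mem_nhds hu)
  set h : ℝ → ℝ := fun u => f u / deriv f u with hh
  have hderivh : ∀ u > (0:ℝ), HasDerivAt h
      ((deriv f u * deriv f u - f u * deriv (deriv f) u) / (deriv f u) ^ 2) u := by
    intro u hu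
    exact HasDerivAt.div ((hdf u hu).hasDerivAt) ((hdf' u hu).hasDerivAt)
      (ne_of_gt (hf' u hu))
  set c : ℝ := (1 + q) / 2 with hc
  have hqc : q < c := by rw [hc]; linarith
  have hc1 : c < 1 := by rw [hc]; linarith
  -- eventually g < c
  have hev : ∀ᶠ u in atTop, (deriv f u) ^ 2 / (f u * deriv (deriv f) u) < c :=
    hq.eventually_lt_const hqc
  rw [eventually_atTop] at hev
  obtain ⟨a, ha⟩ := hev
  set u₀ : ℝ := max a 1 with hu₀def
  have hu₀pos : (0:ℝ) < u₀ := lt_of_lt_of_le one_pos (le_max_right a 1)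
  have hgu₀ : (deriv f u₀) ^ 2 / (f u₀ * deriv (deriv f) u₀) < c := ha u₀ (le_max_left a 1)
  have hcpos : 0 < c := by
    have h1 : 0 < (deriv f u₀) ^ 2 / (f u₀ * deriv (deriv f) u₀) :=
      div_pos (pow_pos (hf' u₀ hu₀pos) 2)
        (mul_pos (hfpos u₀ hu₀pos) (hf'' u₀ hu₀pos))
    linarith
  -- key derivative bound on [u₀, ∞)
  have hkey : ∀ u, u₀ ≤ u →
      (deriv f u * deriv f u - f u * deriv (deriv f) u) / (deriv f u) ^ 2 ≤ 1 - 1/c := by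
    intro u hu
    have hupos : 0 < u := lt_of_lt_of_le hu₀pos hu
    have hA : 0 < (deriv f u) ^ 2 := pow_pos (hf' u hupos) 2
    have hB : 0 < f u * deriv (deriv f) u := mul_pos (hfpos u hupos) (hf'' u hupos)
    have hg : (deriv f u) ^ 2 / (f u * deriv (deriv f) u) < c :=
      ha u (le_trans (le_max_left a 1) hu)
    have hAB : (deriv f u) ^ 2 < c * (f u * deriv (deriv f) u) :=
      (div_lt_iff₀ hB).mp hg
    have h1 : (deriv f u) ^ 2 / c ≤ f u * deriv (deriv f) u := by
      rw [div_le_iff₀ hcpos]; nlinarith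
    have h2 : (1 - 1/c) * (deriv f u)^2 = (deriv f u)^2 - (deriv f u)^2 / c := by ring
    rw [div_le_iff₀ hA, h2]
    nlinarith
  -- φ is antitone on Ici u₀
  set φ : ℝ → ℝ := fun u => h u - (1 - 1/c) * u with hφ
  have hφdiff : ∀ u ∈ Set.Ici u₀, DifferentiableAt ℝ φ u := by
    intro u hu
    have hupos : 0 < u := lt_of_lt_of_le hu₀pos hu
    exact ((hderivh u hupos).differentiableAt).sub
      ((differentiableAt_fun_id).const_mul (1 - 1/c))
  have hφanti : AntitoneOn φ (Set.Ici u₀) := by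
    apply antitoneOn_of_deriv_nonpos (convex_Ici u₀)
      (fun u hu => (hφdiff u hu).continuousAt.continuousWithinAt)
      (fun u hu => (hφdiff u (interior_subset hu)).differentiableWithinAt)
    intro u hu
    rw [interior_Ici] at hu
    have hupos : 0 < u := lt_trans hu₀pos hu
    have hd : HasDerivAt φ
        ((deriv f u * deriv f u - f u * deriv (deriv f) u) / (deriv f u) ^ 2 - (1 - 1/c)) u := by
      have := (hderivh u hupos).sub (((hasDerivAt_id u).const_mul (1 - 1/c)))
      simp only [mul_one, id_eq] at this
      exact this
    rw [hd.deriv]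
    have := hkey u (le_of_lt hu)
    linarith
  -- derive contradiction
  have hδ : 0 < 1/c - 1 := by
    have : 1 < 1/c := by rw [lt_div_iff₀ hcpos]; linarith
    linarith
  have hhu₀ : 0 < h u₀ := div_pos (hfpos u₀ hu₀pos) (hf' u₀ hu₀pos)
  set u₁ : ℝ := u₀ + h u₀ / (1/c - 1) + 1 with hu₁def
  have hu₁ : u₀ ≤ u₁ := by
    have h3 : 0 < h u₀ / (1/c - 1) := div_pos hhu₀ hδ
    rw [hu₁def]; linarith
  have := hφanti (self_mem_Ici) hu₁ hu₁
  have hbound : h u₁ ≤ h u₀ - (1/c - 1) * (u₁ - u₀) := by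
    simp only [hφ] at this
    nlinarith
  have hdiffeq : u₁ - u₀ = h u₀ / (1/c - 1) + 1 := by rw [hu₁def]; ring
  rw [hdiffeq] at hbound
  have hMD : (1/c - 1) * (h u₀ / (1/c - 1)) = h u₀ := by
    rw [mul_comm]; exact div_mul_cancel₀ _ hδ.ne'
  have hhu₁ : 0 < h u₁ := div_pos (hfpos u₁ (lt_of_lt_of_le hu₀pos hu₁))
    (hf' u₁ (lt_of_lt_of_le hu₀pos hu₁))
  nlinarith [hbound, hMD, hδ, hhu₁]
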